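/- Let f : ℝ → ℝ be of class C^6 and fix x ∈ ℝ. For h > 0 and a half-integer index s ∈ {1/2, −1/2}, define the Old-Scheme numerical flux with exact point values: F_s(h) := f(x + s·h) − (h²/24)·D2_s(h) + (7h⁴/5760)·D4_s(h), where, writing f_m := f(x + m·h) for integer m, D2_{1/2}(h) := [−5f_{−2} + 39f_{−1} − 34f_0 − 34f_1 + 39f_2 − 5f_3]/(48h²), D4_{1/2}(h) := [f_{−2} − 3f_{−1} + 2f_0 + 2f_1 − 3f_2 + f_3]/(2h⁴), and D2_{−1/2}(h), D4_{−1/2}(h) are the same stencils shifted left by one grid point (using f_{−3}, …, f_2). Then the flux difference (F_{1/2}(h) − F_{−1/2}(h))/h approximates f'(x) to fifth order: there exist C > 0 and δ > 0 such that for all 0 < h < δ, |(F_{1/2}(h) − F_{−1/2}(h))/h − f'(x)| ≤ C·h⁵. -/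

import Mathlib

set_option maxHeartbeats 2000000

open Set

/-- One mean-value step: if `g 0 = 0` and `|g'| ≤ M * |t|^n` near `0`, then
`|g t| ≤ M * |t|^(n+1)`. -/
lemma mvt_step_aux {g G : ℝ → ℝ} {M : ℝ} {n : ℕ} (hM : 0 ≤ M) (hg0 : g 0 = 0)
    (hderiv : ∀ t : ℝ, |t| ≤ 1 → HasDerivAt g (G t) t)
    (hG : ∀ t : ℝ, |t| ≤ 1 → |G t| ≤ M * |t| ^ n) :
    ∀ t : ℝ, |t| ≤ 1 → |g t| ≤ M * |t| ^ (n + 1) := by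
  intro t ht
  have habs : (0:ℝ) ≤ |t| := abs_nonneg t
  have hmem : ∀ y ∈ Icc (-|t|) |t|, |y| ≤ 1 :=
    fun y hy => le_trans (abs_le.mpr ⟨hy.1, hy.2⟩) ht
  have hb : ∀ y ∈ Icc (-|t|) |t|, ‖G y‖ ≤ M * |t| ^ n := by
    intro y hy
    refine le_trans (hG y (hmem y hy)) ?_
    have : |y| ≤ |t| := abs_le.mpr ⟨hy.1, hy.2⟩
    gcongr
  have hd : ∀ y ∈ Icc (-|t|) |t|, HasDerivWithinAt g (G y) (Icc (-|t|) |t|) y :=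
    fun y hy => (hderiv y (hmem y hy)).hasDerivWithinAt
  have h0mem : (0:ℝ) ∈ Icc (-|t|) |t| := ⟨neg_nonpos.mpr habs, habs⟩
  have htmem : t ∈ Icc (-|t|) |t| := ⟨neg_abs_le t, le_abs_self t⟩
  have key := (convex_Icc (-|t|) |t|).norm_image_sub_le_of_norm_hasDerivWithin_le
    hd hb h0mem htmem
  have : |g t| ≤ M * |t| ^ n * |t| := by
    simpa [hg0, Real.norm_eq_abs] using key
  calc |g t| ≤ M * |t| ^ n * |t| := this
    _ = M * |t| ^ (n + 1) := by ring

theorem old_aweno_flux_difference_fifth_order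
    (f : ℝ → ℝ) (hf : ContDiff ℝ 6 f) (x : ℝ) :
    ∃ C > (0 : ℝ), ∃ δ > (0 : ℝ), ∀ h : ℝ, 0 < h → h < δ →
      |((f (x + h / 2)
            - h ^ 2 / 24 *
              ((-5 * f (x - 2 * h) + 39 * f (x - h) - 34 * f x - 34 * f (x + h)
                  + 39 * f (x + 2 * h) - 5 * f (x + 3 * h)) / (48 * h ^ 2))
            + 7 * h ^ 4 / 5760 *
              ((f (x - 2 * h) - 3 * f (x - h) + 2 * f x + 2 * f (x + h)
                  - 3 * f (x + 2 * h) + f (x + 3 * h)) / (2 * h ^ 4)))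
        - (f (x - h / 2)
            - h ^ 2 / 24 *
              ((-5 * f (x - 3 * h) + 39 * f (x - 2 * h) - 34 * f (x - h) - 34 * f x
                  + 39 * f (x + h) - 5 * f (x + 2 * h)) / (48 * h ^ 2))
            + 7 * h ^ 4 / 5760 *
              ((f (x - 3 * h) - 3 * f (x - 2 * h) + 2 * f (x - h) + 2 * f x
                  - 3 * f (x + h) + f (x + 2 * h)) / (2 * h ^ 4)))) / h
        - deriv f x| ≤ C * h ^ 5 := by
  obtain ⟨M, hM⟩ : ∃ M, ∀ y ∈ Icc (x - 1) (x + 1), ‖iteratedDeriv 6 f y‖ ≤ M :=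
    isCompact_Icc.exists_bound_of_continuousOn
      ((hf.continuous_iteratedDeriv 6 (by norm_num)).continuousOn)
  set M' : ℝ := max M 0 with hM'def
  have hM'0 : (0:ℝ) ≤ M' := le_max_right M 0
  have hM6 : ∀ t : ℝ, |t| ≤ 1 → |iteratedDeriv 6 f (x + t)| ≤ M' := by
    intro t ht
    obtain ⟨h1, h2⟩ := abs_le.mp ht
    have hmem : x + t ∈ Icc (x - 1) (x + 1) := ⟨by linarith, by linarith⟩
    exact le_trans (hM _ hmem) (le_max_left M 0)
  set d0 := f x with hd0
  set d1 := deriv f x with hd1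
  set d2 := iteratedDeriv 2 f x with hd2
  set d3 := iteratedDeriv 3 f x with hd3
  set d4 := iteratedDeriv 4 f x with hd4
  set d5 := iteratedDeriv 5 f x with hd5
  have hshift : ∀ k : ℕ, k < 6 → ∀ t : ℝ,
      HasDerivAt (fun s : ℝ => iteratedDeriv k f (x + s)) (iteratedDeriv (k+1) f (x + t)) t := by
    intro k hk t
    have h1 : HasDerivAt (iteratedDeriv k f) (iteratedDeriv (k+1) f (x + t)) (x + t) := by
      rw [iteratedDeriv_succ]
      exact ((hf.differentiable_iteratedDeriv k (by exact_mod_cast hk)) (x+t)).hasDerivAt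
    exact h1.comp_const_add x t
  have c6 : ∀ t : ℝ, |t| ≤ 1 → |iteratedDeriv 6 f (x + t)| ≤ M' * |t| ^ 0 := by
    intro t ht; simpa using hM6 t ht
  have c5 : ∀ t : ℝ, |t| ≤ 1 →
      |iteratedDeriv 5 f (x + t) - d5| ≤ M' * |t| ^ 1 := by
    refine mvt_step_aux (g := fun t => iteratedDeriv 5 f (x + t) - d5)
      (G := fun t => iteratedDeriv 6 f (x + t)) hM'0 (by simp [hd5]) (fun t _ => ?_) c6
    exact ((hshift 5 (by norm_num) t).sub (hasDerivAt_const t d5)).congr_deriv (by ring)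
  have c4 : ∀ t : ℝ, |t| ≤ 1 →
      |iteratedDeriv 4 f (x + t) - (d4 + d5 * t)| ≤ M' * |t| ^ 2 := by
    refine mvt_step_aux (g := fun t => iteratedDeriv 4 f (x + t) - (d4 + d5 * t))
      (G := fun t => iteratedDeriv 5 f (x + t) - d5) hM'0 (by simp [hd4]) (fun t _ => ?_) c5
    have h := (hshift 4 (by norm_num) t).sub
      ((hasDerivAt_const t d4).add ((hasDerivAt_id t).const_mul d5))
    exact h.congr_deriv (by ring)
  have c3 : ∀ t : ℝ, |t| ≤ 1 →
      |iteratedDeriv 3 f (x + t) - (d3 + d4 * t + d5 * t ^ 2 / 2)| ≤ M' * |t| ^ 3 := by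
    refine mvt_step_aux
      (g := fun t => iteratedDeriv 3 f (x + t) - (d3 + d4 * t + d5 * t ^ 2 / 2))
      (G := fun t => iteratedDeriv 4 f (x + t) - (d4 + d5 * t)) hM'0
      (by simp [hd3]) (fun t _ => ?_) c4
    have h := (hshift 3 (by norm_num) t).sub
      (((hasDerivAt_const t d3).add ((hasDerivAt_id t).const_mul d4)).add
        (((hasDerivAt_pow 2 t).const_mul d5).div_const 2))
    exact h.congr_deriv (by push_cast; ring)
  have c2 : ∀ t : ℝ, |t| ≤ 1 →
      |iteratedDeriv 2 f (x + t) - (d2 + d3 * t + d4 * t ^ 2 / 2 + d5 * t ^ 3 / 6)|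
        ≤ M' * |t| ^ 4 := by
    refine mvt_step_aux
      (g := fun t => iteratedDeriv 2 f (x + t)
        - (d2 + d3 * t + d4 * t ^ 2 / 2 + d5 * t ^ 3 / 6))
      (G := fun t => iteratedDeriv 3 f (x + t) - (d3 + d4 * t + d5 * t ^ 2 / 2)) hM'0
      (by simp [hd2]) (fun t _ => ?_) c3
    have h := (hshift 2 (by norm_num) t).sub
      ((((hasDerivAt_const t d2).add ((hasDerivAt_id t).const_mul d3)).add
        (((hasDerivAt_pow 2 t).const_mul d4).div_const 2)).add
        (((hasDerivAt_pow 3 t).const_mul d5).div_const 6))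
    exact h.congr_deriv (by push_cast; ring)
  have c1 : ∀ t : ℝ, |t| ≤ 1 →
      |deriv f (x + t) - (d1 + d2 * t + d3 * t ^ 2 / 2 + d4 * t ^ 3 / 6 + d5 * t ^ 4 / 24)|
        ≤ M' * |t| ^ 5 := by
    have hone : ∀ t : ℝ, deriv f (x + t) = iteratedDeriv 1 f (x + t) := by
      intro t; rw [iteratedDeriv_one]
    refine mvt_step_aux
      (g := fun t => deriv f (x + t)
        - (d1 + d2 * t + d3 * t ^ 2 / 2 + d4 * t ^ 3 / 6 + d5 * t ^ 4 / 24))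
      (G := fun t => iteratedDeriv 2 f (x + t)
        - (d2 + d3 * t + d4 * t ^ 2 / 2 + d5 * t ^ 3 / 6)) hM'0
      (by simp [hd1]) (fun t _ => ?_) c2
    have hsh : HasDerivAt (fun s : ℝ => deriv f (x + s)) (iteratedDeriv 2 f (x + t)) t := by
      have := hshift 1 (by norm_num) t
      simpa [iteratedDeriv_one] using this
    have h := hsh.sub
      (((((hasDerivAt_const t d1).add ((hasDerivAt_id t).const_mul d2)).add
        (((hasDerivAt_pow 2 t).const_mul d3).div_const 2)).add
        (((hasDerivAt_pow 3 t).const_mul d4).div_const 6)).add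
        (((hasDerivAt_pow 4 t).const_mul d5).div_const 24))
    exact h.congr_deriv (by push_cast; ring)
  have c0 : ∀ t : ℝ, |t| ≤ 1 →
      |f (x + t) - (d0 + d1 * t + d2 * t ^ 2 / 2 + d3 * t ^ 3 / 6 + d4 * t ^ 4 / 24
        + d5 * t ^ 5 / 120)| ≤ M' * |t| ^ 6 := by
    refine mvt_step_aux
      (g := fun t => f (x + t) - (d0 + d1 * t + d2 * t ^ 2 / 2 + d3 * t ^ 3 / 6
        + d4 * t ^ 4 / 24 + d5 * t ^ 5 / 120))
      (G := fun t => deriv f (x + t)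
        - (d1 + d2 * t + d3 * t ^ 2 / 2 + d4 * t ^ 3 / 6 + d5 * t ^ 4 / 24)) hM'0
      (by simp [hd0]) (fun t _ => ?_) c1
    have hsh : HasDerivAt (fun s : ℝ => f (x + s)) (deriv f (x + t)) t := by
      have := hshift 0 (by norm_num) t
      simpa [iteratedDeriv_one] using this
    have h := hsh.sub
      ((((((hasDerivAt_const t d0).add ((hasDerivAt_id t).const_mul d1)).add
        (((hasDerivAt_pow 2 t).const_mul d2).div_const 2)).add
        (((hasDerivAt_pow 3 t).const_mul d3).div_const 6)).add
        (((hasDerivAt_pow 4 t).const_mul d4).div_const 24)).add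
        (((hasDerivAt_pow 5 t).const_mul d5).div_const 120))
    exact h.congr_deriv (by push_cast; ring)
  clear c1 c2 c3 c4 c5 c6 hM6 hM hshift
  refine ⟨2187 * M' + 1, by positivity, 1/3, by norm_num, fun h hh0 hh3 => ?_⟩
  have hne : h ≠ 0 := ne_of_gt hh0
  have key : ((f (x + h / 2)
            - h ^ 2 / 24 *
              ((-5 * f (x - 2 * h) + 39 * f (x - h) - 34 * f x - 34 * f (x + h)
                  + 39 * f (x + 2 * h) - 5 * f (x + 3 * h)) / (48 * h ^ 2))
            + 7 * h ^ 4 / 5760 *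
              ((f (x - 2 * h) - 3 * f (x - h) + 2 * f x + 2 * f (x + h)
                  - 3 * f (x + 2 * h) + f (x + 3 * h)) / (2 * h ^ 4)))
        - (f (x - h / 2)
            - h ^ 2 / 24 *
              ((-5 * f (x - 3 * h) + 39 * f (x - 2 * h) - 34 * f (x - h) - 34 * f x
                  + 39 * f (x + h) - 5 * f (x + 2 * h)) / (48 * h ^ 2))
            + 7 * h ^ 4 / 5760 *
              ((f (x - 3 * h) - 3 * f (x - 2 * h) + 2 * f (x - h) + 2 * f x
                  - 3 * f (x + h) + f (x + 2 * h)) / (2 * h ^ 4)))) / h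
        - d1
      = ((1) * (f (x + h / 2) - (d0 + d1*(h/2) + d2*(h/2)^2/2 + d3*(h/2)^3/6 + d4*(h/2)^4/24 + d5*(h/2)^5/120))
          + (-1) * (f (x - h / 2) - (d0 + d1*(-(h/2)) + d2*(-(h/2))^2/2 + d3*(-(h/2))^3/6 + d4*(-(h/2))^4/24 + d5*(-(h/2))^5/120))
          + (17/256) * (f (x + h) - (d0 + d1*(h) + d2*(h)^2/2 + d3*(h)^3/6 + d4*(h)^4/24 + d5*(h)^5/120))
          + (-17/256) * (f (x - h) - (d0 + d1*(-h) + d2*(-h)^2/2 + d3*(-h)^3/6 + d4*(-h)^4/24 + d5*(-h)^5/120))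
          + (-13/320) * (f (x + 2 * h) - (d0 + d1*(2*h) + d2*(2*h)^2/2 + d3*(2*h)^3/6 + d4*(2*h)^4/24 + d5*(2*h)^5/120))
          + (13/320) * (f (x - 2 * h) - (d0 + d1*(-(2*h)) + d2*(-(2*h))^2/2 + d3*(-(2*h))^3/6 + d4*(-(2*h))^4/24 + d5*(-(2*h))^5/120))
          + (19/3840) * (f (x + 3 * h) - (d0 + d1*(3*h) + d2*(3*h)^2/2 + d3*(3*h)^3/6 + d4*(3*h)^4/24 + d5*(3*h)^5/120))
          + (-19/3840) * (f (x - 3 * h) - (d0 + d1*(-(3*h)) + d2*(-(3*h))^2/2 + d3*(-(3*h))^3/6 + d4*(-(3*h))^4/24 + d5*(-(3*h))^5/120))) / h := by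
    have e1 : ∀ A : ℝ, h ^ 2 / 24 * (A / (48 * h ^ 2)) = A / 1152 := by
      intro A; field_simp; ring
    have e2 : ∀ A : ℝ, 7 * h ^ 4 / 5760 * (A / (2 * h ^ 4)) = 7 * A / 11520 := by
      intro A; field_simp; ring
    rw [e1, e1, e2, e2, hd0]
    rw [div_sub' hne, div_eq_div_iff hne hne]
    ring
  rw [key]
  -- bound the remainder terms
  have hb : ∀ (a : ℝ), |a| ≤ 3 * h → M' * |a| ^ 6 ≤ M' * (729 * h ^ 6) := by
    intro a ha
    have h6 : |a| ^ 6 ≤ (3 * h) ^ 6 := by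
      apply pow_le_pow_left₀ (abs_nonneg a) ha
    have : (3 * h) ^ 6 = 729 * h ^ 6 := by ring
    nlinarith [hM'0]
  have B0 : (0:ℝ) ≤ M' * (729 * h ^ 6) := by positivity
  have hbnd : ∀ (a : ℝ) (y : ℝ), y = x + a → |a| ≤ 3 * h →
      |f y - (d0 + d1 * a + d2 * a ^ 2 / 2 + d3 * a ^ 3 / 6 + d4 * a ^ 4 / 24
        + d5 * a ^ 5 / 120)| ≤ M' * (729 * h ^ 6) := by
    intro a y hy ha
    have ha1 : |a| ≤ 1 := le_trans ha (by linarith)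
    subst hy
    exact le_trans (c0 a ha1) (hb a ha)
  have h2 : (0:ℝ) < 3 * h := by linarith
  have r1 := hbnd (h/2) (x + h / 2) (by ring) (by rw [abs_of_pos (by linarith : (0:ℝ) < h/2)]; linarith)
  have r2 := hbnd (-(h/2)) (x - h / 2) (by ring) (by rw [abs_neg, abs_of_pos (by linarith : (0:ℝ) < h/2)]; linarith)
  have r3 := hbnd h (x + h) (by ring) (by rw [abs_of_pos hh0]; linarith)
  have r4 := hbnd (-h) (x - h) (by ring) (by rw [abs_neg, abs_of_pos hh0]; linarith)
  have r5 := hbnd (2*h) (x + 2 * h) (by ring) (by rw [abs_of_pos (by linarith : (0:ℝ) < 2*h)]; linarith)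
  have r6 := hbnd (-(2*h)) (x - 2 * h) (by ring) (by rw [abs_neg, abs_of_pos (by linarith : (0:ℝ) < 2*h)]; linarith)
  have r7 := hbnd (3*h) (x + 3 * h) (by ring) (by rw [abs_of_pos h2])
  have r8 := hbnd (-(3*h)) (x - 3 * h) (by ring) (by rw [abs_neg, abs_of_pos h2])
  set B := M' * (729 * h ^ 6) with hB
  rw [abs_div, abs_of_pos hh0]
  rw [div_le_iff₀ hh0]
  have tri : |(1) * (f (x + h / 2) - (d0 + d1*(h/2) + d2*(h/2)^2/2 + d3*(h/2)^3/6 + d4*(h/2)^4/24 + d5*(h/2)^5/120))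
          + (-1) * (f (x - h / 2) - (d0 + d1*(-(h/2)) + d2*(-(h/2))^2/2 + d3*(-(h/2))^3/6 + d4*(-(h/2))^4/24 + d5*(-(h/2))^5/120))
          + (17/256) * (f (x + h) - (d0 + d1*(h) + d2*(h)^2/2 + d3*(h)^3/6 + d4*(h)^4/24 + d5*(h)^5/120))
          + (-17/256) * (f (x - h) - (d0 + d1*(-h) + d2*(-h)^2/2 + d3*(-h)^3/6 + d4*(-h)^4/24 + d5*(-h)^5/120))
          + (-13/320) * (f (x + 2 * h) - (d0 + d1*(2*h) + d2*(2*h)^2/2 + d3*(2*h)^3/6 + d4*(2*h)^4/24 + d5*(2*h)^5/120))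
          + (13/320) * (f (x - 2 * h) - (d0 + d1*(-(2*h)) + d2*(-(2*h))^2/2 + d3*(-(2*h))^3/6 + d4*(-(2*h))^4/24 + d5*(-(2*h))^5/120))
          + (19/3840) * (f (x + 3 * h) - (d0 + d1*(3*h) + d2*(3*h)^2/2 + d3*(3*h)^3/6 + d4*(3*h)^4/24 + d5*(3*h)^5/120))
          + (-19/3840) * (f (x - 3 * h) - (d0 + d1*(-(3*h)) + d2*(-(3*h))^2/2 + d3*(-(3*h))^3/6 + d4*(-(3*h))^4/24 + d5*(-(3*h))^5/120))| ≤ 1 * B + 1 * B + (17/256) * B + (17/256) * B + (13/320) * B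
      + (13/320) * B + (19/3840) * B + (19/3840) * B := by
    have step : ∀ (u v Bu Bv : ℝ), |u| ≤ Bu → |v| ≤ Bv → |u + v| ≤ Bu + Bv :=
      fun u v Bu Bv hu hv => le_trans (abs_add_le u v) (add_le_add hu hv)
    have m : ∀ (c r : ℝ), |r| ≤ B → |c * r| ≤ |c| * B := by
      intro c r hr
      rw [abs_mul]
      exact mul_le_mul_of_nonneg_left hr (abs_nonneg c)
    refine le_trans (step _ _ _ _ (le_trans (step _ _ _ _ (le_trans (step _ _ _ _
      (le_trans (step _ _ _ _ (le_trans (step _ _ _ _ (le_trans (step _ _ _ _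
      (le_trans (step _ _ _ _ (m _ _ r1) (m _ _ r2)) le_rfl) (m _ _ r3)) le_rfl)
      (m _ _ r4)) le_rfl) (m _ _ r5)) le_rfl) (m _ _ r6)) le_rfl) (m _ _ r7)) le_rfl)
      (m _ _ r8)) ?_
    norm_num
  refine le_trans tri ?_
  rw [hB]
  nlinarith [hM'0, pow_pos hh0 6, pow_pos hh0 5, sq_nonneg h]
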